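/- For 0 < q < 1, nonnegative integers α, β, and any function f : ℝ → ℝ, the Jackson q-integral satisfies ∫_0^1 f(q^{-β} x) x^α (x; q^{-1})_β d_q x = q^{β(α+1)} ∫_0^1 f(x) x^α (qx; q)_β d_q x. -/

import Mathlib

/-- The Jackson q-integral `∫_0^c f(x) d_q x = c(1-q) ∑_{k=0}^∞ f(c q^k) q^k`. -/
noncomputable def jacksonIntegral (q c : ℝ) (f : ℝ → ℝ) : ℝ :=
  c * (1 - q) * ∑' k : ℕ, f (c * q ^ k) * q ^ k

/-- The finite q-Pochhammer symbol `(a;q)_m = ∏_{k=0}^{m-1} (1 - a q^k)`. -/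
noncomputable def qPoch (a q : ℝ) (m : ℕ) : ℝ :=
  ∏ k ∈ Finset.range m, (1 - a * q ^ k)

/-- For `0 < q < 1`, nonnegative integers `α, β` and any `f : ℝ → ℝ` (with both Jackson
integrals absolutely convergent),
`∫_0^1 f(q^{-β} x) x^α (x; q^{-1})_β d_q x = q^{β(α+1)} ∫_0^1 f(x) x^α (qx; q)_β d_q x`. -/
theorem jackson_shift (q : ℝ) (hq0 : 0 < q) (hq1 : q < 1) (α β : ℕ) (f : ℝ → ℝ)
    (h1 : Summable fun k : ℕ =>
      |f (q ^ (-(β : ℤ)) * q ^ k) * (q ^ k) ^ α * qPoch (q ^ k) q⁻¹ β * q ^ k|)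
    (h2 : Summable fun k : ℕ =>
      |f (q ^ k) * (q ^ k) ^ α * qPoch (q * q ^ k) q β * q ^ k|) :
    jacksonIntegral q 1 (fun x => f (q ^ (-(β : ℤ)) * x) * x ^ α * qPoch x q⁻¹ β) =
      q ^ (β * (α + 1)) * jacksonIntegral q 1 (fun x => f x * x ^ α * qPoch (q * x) q β) := by
  have hq : q ≠ 0 := ne_of_gt hq0
  unfold jacksonIntegral
  simp only [one_mul]
  set g : ℕ → ℝ := fun k =>
    f (q ^ (-(β : ℤ)) * q ^ k) * (q ^ k) ^ α * qPoch (q ^ k) q⁻¹ β * q ^ k with hg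
  set h : ℕ → ℝ := fun k => f (q ^ k) * (q ^ k) ^ α * qPoch (q * q ^ k) q β * q ^ k with hh
  have hzero : ∀ k < β, g k = 0 := by
    intro k hk
    have hp : qPoch (q ^ k) q⁻¹ β = 0 := by
      unfold qPoch
      apply Finset.prod_eq_zero (Finset.mem_range.mpr hk)
      rw [inv_pow, mul_inv_cancel₀ (pow_ne_zero k hq)]
      ring
    simp [g, hp]
  have hkey : ∀ n : ℕ, g (n + β) = q ^ (β * (α + 1)) * h n := by
    intro n
    have e1 : q ^ (-(β : ℤ)) * q ^ (n + β) = q ^ n := by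
      rw [zpow_neg, zpow_natCast, pow_add]
      field_simp
    have e2 : qPoch (q ^ (n + β)) q⁻¹ β = qPoch (q * q ^ n) q β := by
      unfold qPoch
      rw [← Finset.prod_range_reflect (fun j => (1 - q * q ^ n * q ^ j)) β]
      apply Finset.prod_congr rfl
      intro j hj
      rw [Finset.mem_range] at hj
      have ea : q ^ (n + β) * q⁻¹ ^ j = q ^ (n + β - j) := by
        rw [inv_pow]
        rw [show n + β = (n + β - j) + j by omega, pow_add,
          mul_assoc, mul_inv_cancel₀ (pow_ne_zero j hq), mul_one]
        congr 1
        omega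
      have eb : q * q ^ n * q ^ (β - 1 - j) = q ^ (n + β - j) := by
        rw [← pow_succ', ← pow_add]
        congr 1
        omega
      rw [ea, eb]
    have e3 : (q ^ (n + β)) ^ α * q ^ (n + β) =
        q ^ (β * (α + 1)) * ((q ^ n) ^ α * q ^ n) := by
      rw [← pow_mul, ← pow_mul, ← pow_add, ← pow_add, ← pow_add]
      congr 1
      ring
    simp only [g, h, e1, e2]
    linear_combination f (q ^ n) * qPoch (q * q ^ n) q β * e3
  have hsum : ∑' k, g k = ∑' n, g (n + β) := by
    refine ((add_left_injective β).tsum_eq (f := g) ?_).symm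
    intro k hk
    rw [Function.mem_support] at hk
    have hkβ : β ≤ k := by
      by_contra hlt
      exact hk (hzero k (by omega))
    exact ⟨k - β, Nat.sub_add_cancel hkβ⟩
  calc (1 - q) * ∑' k, g k = (1 - q) * ∑' n, g (n + β) := by rw [hsum]
    _ = (1 - q) * ∑' n, q ^ (β * (α + 1)) * h n := by
        congr 1; exact tsum_congr hkey
    _ = (1 - q) * (q ^ (β * (α + 1)) * ∑' n, h n) := by rw [tsum_mul_left]
    _ = q ^ (β * (α + 1)) * ((1 - q) * ∑' n, h n) := by ring
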